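/- Let n ≥ 2, 0 < σ < 2, λ ∈ ℝ, and let W ∈ C^{1,1}_loc(ℝⁿ) ∩ L_σ be anti-symmetric about T_λ (W(x^λ) = -W(x) for all x). There exists a constant C > 0 depending only on n and σ with the following property: if W attains its minimum over Σ_λ at a point x̄ ∈ Σ_λ with W(x̄) < 0, x̄ ≠ 0, and 2|x̄| + x̄₁ > λ, then (-Δ)^{σ/2}W(x̄) ≤ C · C_{n,σ} · |x̄|^{-σ} · W(x̄) < 0. -/

import Mathlib

open MeasureTheory Filter Metric Set Bornology

noncomputable section

/-- The space `ℝⁿ`. -/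
abbrev En (n : ℕ) := EuclideanSpace ℝ (Fin n)

/-- Membership in the weighted space `L_σ`. -/
def MemL (n : ℕ) (σ : ℝ) (w : En n → ℝ) : Prop :=
  LocallyIntegrable w volume ∧
    Integrable (fun x : En n => |w x| / (1 + ‖x‖ ^ ((n : ℝ) + σ))) volume

/-- `C^{1,1}_loc` on an open set `Ω`: near every point of `Ω`, `w` is
differentiable with Lipschitz-continuous derivative. -/
def C11locOn (n : ℕ) (Ω : Set (En n)) (w : En n → ℝ) : Prop :=
  ∀ x ∈ Ω, ∃ ε > 0, ∃ K : NNReal, ball x ε ⊆ Ω ∧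
    (∀ y ∈ ball x ε, DifferentiableAt ℝ w y) ∧
    LipschitzOnWith K (fderiv ℝ w) (ball x ε)

/-- `C^{1,1}_loc` on all of `ℝⁿ`. -/
def C11loc (n : ℕ) (w : En n → ℝ) : Prop := C11locOn n univ w

/-- `HasFracLap n σ c w x L` : the fractional Laplacian `(-Δ)^{σ/2} w`, with
normalization constant `c = C_{n,σ} > 0`, exists at `x` as a principal value
and is equal to `L`. -/
def HasFracLap (n : ℕ) (σ c : ℝ) (w : En n → ℝ) (x : En n) (L : ℝ) : Prop :=
  Tendsto
    (fun ε : ℝ => c * ∫ y in {y : En n | ε ≤ dist x y},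
        (w x - w y) / dist x y ^ ((n : ℝ) + σ))
    (nhdsWithin 0 (Ioi 0)) (nhds L)

/-- Reflection `x ↦ x^λ` about the hyperplane `T_λ = {x : x₁ = λ}`. -/
def reflPt (n : ℕ) [NeZero n] (l : ℝ) (x : En n) : En n :=
  WithLp.toLp 2 (fun i => if i = 0 then 2 * l - x 0 else x i)

/-- The half space `Σ_λ = {x : x₁ < λ}`. -/
def halfSpace (n : ℕ) [NeZero n] (l : ℝ) : Set (En n) := {x | x 0 < l}

namespace Statement7Aux

variable {n : ℕ} [NeZero n]

lemma coord_le_dist (x y : En n) (i : Fin n) : dist (x i) (y i) ≤ dist x y := by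
  rw [EuclideanSpace.dist_eq]
  have h1 : dist (x i) (y i) = Real.sqrt (dist (x i) (y i) ^ 2) := by
    rw [Real.sqrt_sq dist_nonneg]
  rw [h1]
  apply Real.sqrt_le_sqrt
  exact Finset.single_le_sum (f := fun j => dist (x j) (y j) ^ 2)
    (fun j _ => sq_nonneg _) (Finset.mem_univ i)

lemma refl_mp {l : ℝ} : MeasurePreserving (reflPt n l) volume volume := by
  have h : ∀ i : Fin n,
      MeasurePreserving (fun t : ℝ => if i = 0 then 2*l - t else t) volume volume := by
    intro i
    by_cases hi : i = 0 <;> simp [hi]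
    · exact Measure.measurePreserving_sub_left volume (2*l)
    · exact MeasurePreserving.id _
  have hpi : MeasurePreserving (fun (x : Fin n → ℝ) i => if i = 0 then 2*l - x i else x i)
      (volume) (volume) := by
    rw [volume_pi]
    exact measurePreserving_pi (fun _ : Fin n => (volume : Measure ℝ)) (fun _ => volume) h
  have e := PiLp.volume_preserving_ofLp (Fin n)
  have es := PiLp.volume_preserving_toLp (Fin n)
  have comp := (es.comp hpi).comp e
  have heq : reflPt n l = ((WithLp.toLp 2 ∘ fun (x : Fin n → ℝ) i => if i = 0 then 2 * l - x i else x i)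
      ∘ WithLp.ofLp) := by
    funext x
    ext i
    rcases eq_or_ne i 0 with hi | hi
    · subst hi
      simp [reflPt, Function.comp]
    · simp [reflPt, hi, Function.comp]
  rw [heq]
  exact comp

lemma refl_invol {l : ℝ} (x : En n) : reflPt n l (reflPt n l x) = x := by
  ext i
  rcases eq_or_ne i 0 with hi | hi
  · subst hi; simp [reflPt]
  · simp [reflPt, hi]

/-- Reflection as a measurable equivalence. -/
def reflEquiv (n : ℕ) [NeZero n] (l : ℝ) : En n ≃ᵐ En n where
  toFun := reflPt n l
  invFun := reflPt n l
  left_inv := refl_invol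
  right_inv := refl_invol
  measurable_toFun := (refl_mp (l := l)).measurable
  measurable_invFun := (refl_mp (l := l)).measurable

lemma refl_dist {l : ℝ} (x y : En n) : dist (reflPt n l x) (reflPt n l y) = dist x y := by
  rw [EuclideanSpace.dist_eq, EuclideanSpace.dist_eq]
  congr 1
  apply Finset.sum_congr rfl
  intro i _
  rcases eq_or_ne i 0 with hi | hi
  · subst hi; simp [reflPt, Real.dist_eq]; ring_nf
  · simp [reflPt, hi]

lemma dist_refl_right {l : ℝ} (x y : En n) :
    dist x (reflPt n l y) = dist (reflPt n l x) y := by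
  calc dist x (reflPt n l y)
      = dist (reflPt n l x) (reflPt n l (reflPt n l y)) := (refl_dist _ _).symm
    _ = dist (reflPt n l x) y := by rw [refl_invol]

lemma dist_le_dist_refl {l : ℝ} {x y : En n} (hx : x 0 < l) (hy : y 0 < l) :
    dist x y ≤ dist (reflPt n l x) y := by
  rw [EuclideanSpace.dist_eq, EuclideanSpace.dist_eq]
  apply Real.sqrt_le_sqrt
  apply Finset.sum_le_sum
  intro i _
  rcases eq_or_ne i 0 with hi | hi
  · subst hi
    have hrx : reflPt n l x 0 = 2*l - x 0 := by simp [reflPt]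
    rw [hrx, Real.dist_eq, Real.dist_eq, sq_abs, sq_abs]
    nlinarith [mul_pos (sub_pos.2 hx) (sub_pos.2 hy)]
  · simp [reflPt, hi]

lemma hyper_null (l : ℝ) : volume {x : En n | x 0 = l} = 0 := by
  have hT : MeasurableSet {x : Fin n → ℝ | x 0 = l} := by
    have h1 : {x : Fin n → ℝ | x 0 = l} = (fun x : Fin n → ℝ => x 0) ⁻¹' {l} := rfl
    rw [h1]
    exact (measurable_pi_apply 0) (measurableSet_singleton l)
  have h0 : volume {x : Fin n → ℝ | x 0 = l} = 0 := by
    have := Measure.pi_hyperplane (fun _ : Fin n => (volume : Measure ℝ)) 0 l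
    simpa [volume_pi] using this
  have e := PiLp.volume_preserving_ofLp (Fin n)
  have hpre := e.measure_preimage hT.nullMeasurableSet
  rw [h0] at hpre
  have hset : (WithLp.ofLp ⁻¹' {x : Fin n → ℝ | x 0 = l})
      = {x : En n | x 0 = l} := rfl
  exact hpre

lemma integrable_inv_one_add {p : ℝ} (hnp : (n:ℝ) < p) (hp : 0 < p) :
    Integrable (fun y : En n => (1 + ‖y‖ ^ p)⁻¹) := by
  have hfin : (Module.finrank ℝ (En n) : ℝ) < p := by
    rw [finrank_euclideanSpace_fin]; exact hnp
  have base := integrable_one_add_norm (E := En n) (μ := volume) (r := p) hfin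
  refine (base.const_mul ((2:ℝ)^p)).mono' ?_ ?_
  · refine Continuous.aestronglyMeasurable ?_
    have h1 : Continuous fun y : En n => 1 + ‖y‖ ^ p :=
      continuous_const.add (continuous_norm.rpow_const (fun y => Or.inr hp.le))
    refine h1.inv₀ (fun y => ?_)
    positivity
  · refine Eventually.of_forall (fun y => ?_)
    have hy : 0 ≤ ‖y‖ := norm_nonneg y
    have h1 : (1 + ‖y‖) ^ p ≤ 2^p * (1 + ‖y‖ ^ p) := by
      have hm : (1 + ‖y‖) ≤ 2 * max 1 ‖y‖ := by
        rcases le_total ‖y‖ 1 with h | h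
        · calc 1 + ‖y‖ ≤ 1 + 1 := by linarith
            _ ≤ 2 * max 1 ‖y‖ := by rw [max_eq_left h]; norm_num
        · calc 1 + ‖y‖ ≤ ‖y‖ + ‖y‖ := by linarith
            _ ≤ 2 * max 1 ‖y‖ := by rw [max_eq_right h]; ring_nf; rfl
      calc (1 + ‖y‖) ^ p ≤ (2 * max 1 ‖y‖) ^ p :=
            Real.rpow_le_rpow (by positivity) hm hp.le
        _ = 2^p * (max 1 ‖y‖)^p := Real.mul_rpow (by norm_num) (le_max_of_le_left zero_le_one)
        _ ≤ 2^p * (1 + ‖y‖^p) := by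
            gcongr
            rcases le_total ‖y‖ 1 with h | h
            · rw [max_eq_left h, Real.one_rpow]
              have : 0 ≤ ‖y‖ ^ p := Real.rpow_nonneg hy p
              linarith
            · rw [max_eq_right h]
              linarith [Real.rpow_nonneg hy p]
    have hpos1 : (0:ℝ) < 1 + ‖y‖ ^ p := by positivity
    rw [Real.norm_eq_abs, abs_of_nonneg (by positivity)]
    rw [Real.rpow_neg (by positivity)]
    calc (1 + ‖y‖ ^ p)⁻¹ = 2^p * (2^p * (1 + ‖y‖ ^ p))⁻¹ := by
          rw [mul_inv, ← mul_assoc, mul_inv_cancel₀ (by positivity), one_mul]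
      _ ≤ 2^p * ((1 + ‖y‖)^p)⁻¹ := by gcongr

lemma inv_le_scaled {a b M : ℝ} (ha : 0 < a) (hb : 0 < b) (hM : 0 < M) (h : b ≤ M * a) :
    a⁻¹ ≤ M * b⁻¹ := by
  calc a⁻¹ = M * (M * a)⁻¹ := by
        rw [mul_inv, ← mul_assoc, mul_inv_cancel₀ hM.ne', one_mul]
    _ ≤ M * b⁻¹ := by gcongr

lemma kernel_bound {p : ℝ} (hp : 0 < p) (z : En n) {ε : ℝ} (hε : 0 < ε) (y : En n)
    (hy : ε ≤ dist z y) :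
    (dist z y ^ p)⁻¹ ≤ ((1 + (2*‖z‖)^p) * (ε^p)⁻¹ + 2^p) * (1 + ‖y‖^p)⁻¹ := by
  set d := dist z y with hd_def
  have hd : 0 < d := lt_of_lt_of_le hε hy
  have hεp : (0:ℝ) < ε ^ p := Real.rpow_pos_of_pos hε p
  have hdp : (0:ℝ) < d ^ p := Real.rpow_pos_of_pos hd p
  have hεd : ε ^ p ≤ d ^ p := Real.rpow_le_rpow hε.le hy hp.le
  have hone : (1:ℝ) ≤ (ε^p)⁻¹ * d^p := by
    rw [← div_eq_inv_mul, le_div_iff₀ hεp, one_mul]; exact hεd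
  have hM : (0:ℝ) < (1 + (2*‖z‖)^p) * (ε^p)⁻¹ + 2^p := by positivity
  refine inv_le_scaled (b := 1 + ‖y‖^p) hdp (by positivity) hM ?_
  rcases le_or_gt ‖y‖ (2*d) with hcase | hcase
  · have hyp : ‖y‖ ^ p ≤ 2^p * d^p := by
      calc ‖y‖ ^ p ≤ (2*d)^p := Real.rpow_le_rpow (norm_nonneg y) hcase hp.le
        _ = 2^p * d^p := Real.mul_rpow (by norm_num) hd.le
    have h1 : (1:ℝ) ≤ (1 + (2*‖z‖)^p) * ((ε^p)⁻¹ * d^p) := by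
      have h0 : (0:ℝ) ≤ (2*‖z‖)^p := Real.rpow_nonneg (by positivity) p
      nlinarith
    calc 1 + ‖y‖^p ≤ (1 + (2*‖z‖)^p) * ((ε^p)⁻¹ * d^p) + 2^p * d^p := by linarith
      _ = ((1 + (2*‖z‖)^p) * (ε^p)⁻¹ + 2^p) * d^p := by ring
  · have hyz : ‖y‖ < 2 * ‖z‖ := by
      have h1 : ‖y‖ ≤ d + ‖z‖ := by
        calc ‖y‖ = dist y 0 := by simp
          _ ≤ dist y z + dist z 0 := dist_triangle y z 0
          _ = d + ‖z‖ := by rw [dist_comm y z, ← hd_def]; simp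
      linarith
    have hyp : ‖y‖ ^ p ≤ (2*‖z‖)^p := Real.rpow_le_rpow (norm_nonneg y) hyz.le hp.le
    have h2 : 1 + ‖y‖^p ≤ (1 + (2*‖z‖)^p) * 1 := by rw [mul_one]; linarith
    calc 1 + ‖y‖^p ≤ (1 + (2*‖z‖)^p) * ((ε^p)⁻¹ * d^p) := by
          refine h2.trans ?_
          exact mul_le_mul_of_nonneg_left hone (by positivity)
      _ ≤ ((1 + (2*‖z‖)^p) * (ε^p)⁻¹ + 2^p) * d^p := by
          have h3 : (0:ℝ) ≤ 2^p * d^p := by positivity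
          nlinarith [hdp.le]

lemma measurableSet_far (z : En n) (ε : ℝ) : MeasurableSet {y : En n | ε ≤ dist z y} :=
  (isClosed_le continuous_const (continuous_const.dist continuous_id)).measurableSet

lemma integrableOn_kernel {p : ℝ} (hnp : (n:ℝ) < p) (hp : 0 < p) (z : En n) {ε : ℝ}
    (hε : 0 < ε) :
    IntegrableOn (fun y : En n => (dist z y ^ p)⁻¹) {y | ε ≤ dist z y} volume := by
  set M : ℝ := (1 + (2*‖z‖)^p) * (ε^p)⁻¹ + 2^p with hM_def
  have hM : 0 < M := by positivity
  have hbase := ((integrable_inv_one_add (n := n) hnp hp).const_mul M).restrict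
    (s := {y : En n | ε ≤ dist z y})
  refine hbase.mono' ?_ ?_
  · exact (Measurable.aestronglyMeasurable (by fun_prop)).restrict
  · rw [ae_restrict_iff' (measurableSet_far z ε)]
    refine Eventually.of_forall (fun y hy => ?_)
    have hb := kernel_bound hp z hε y hy
    have hd : 0 < dist z y := lt_of_lt_of_le hε hy
    rw [Real.norm_eq_abs, abs_of_nonneg (by positivity)]
    exact hb

lemma integrableOn_W_kernel {p : ℝ} (hnp : (n:ℝ) < p) (hp : 0 < p) {W : En n → ℝ}
    (hW1 : LocallyIntegrable W volume)
    (hW2 : Integrable (fun x : En n => |W x| / (1 + ‖x‖ ^ p)) volume)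
    (z : En n) {ε : ℝ} (hε : 0 < ε) :
    IntegrableOn (fun y : En n => W y * (dist z y ^ p)⁻¹) {y | ε ≤ dist z y} volume := by
  set M : ℝ := (1 + (2*‖z‖)^p) * (ε^p)⁻¹ + 2^p with hM_def
  have hM : 0 < M := by positivity
  have hbase := (hW2.const_mul M).restrict (s := {y : En n | ε ≤ dist z y})
  refine hbase.mono' ?_ ?_
  · exact (hW1.aestronglyMeasurable.mul
      (Measurable.aestronglyMeasurable (by fun_prop))).restrict
  · rw [ae_restrict_iff' (measurableSet_far z ε)]
    refine Eventually.of_forall (fun y hy => ?_)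
    have hb := kernel_bound hp z hε y hy
    have hd : 0 < dist z y := lt_of_lt_of_le hε hy
    rw [Real.norm_eq_abs, abs_mul, abs_of_nonneg (a := (dist z y ^ p)⁻¹) (by positivity)]
    calc |W y| * (dist z y ^ p)⁻¹ ≤ |W y| * (M * (1 + ‖y‖^p)⁻¹) := by
          exact mul_le_mul_of_nonneg_left hb (abs_nonneg _)
      _ = M * (|W y| / (1 + ‖y‖^p)) := by rw [div_eq_mul_inv]; ring

end Statement7Aux

open Statement7Aux

set_option maxHeartbeats 2000000

/-- (the estimate (d-3)/(d-6): at a negative minimum of an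
anti-symmetric function far away from the plane, the fractional Laplacian is
bounded by `C C_{n,σ} |x̄|^{-σ} W(x̄) < 0`, with `C` depending only on `n, σ`). -/
theorem statement7
    (n : ℕ) [NeZero n] (hn : 2 ≤ n)
    (σ : ℝ) (hσ : 0 < σ ∧ σ < 2) :
    ∃ C > 0, ∀ (lam cns : ℝ), 0 < cns →
      ∀ (W : En n → ℝ), C11loc n W → MemL n σ W →
      (∀ x, W (reflPt n lam x) = -W x) →
      ∀ xb ∈ halfSpace n lam,
      (∀ y ∈ halfSpace n lam, W xb ≤ W y) → W xb < 0 →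
      xb ≠ 0 → lam < 2 * ‖xb‖ + xb 0 →
      ∀ L, HasFracLap n σ cns W xb L →
        L ≤ C * cns * ‖xb‖ ^ (-σ) * W xb ∧
        C * cns * ‖xb‖ ^ (-σ) * W xb < 0 := by
  obtain ⟨hσ1, hσ2⟩ := hσ
  set p : ℝ := (n:ℝ) + σ with hp_def
  have hp : 0 < p := by positivity
  have hnp : (n:ℝ) < p := by simp [hp_def, hσ1]
  set v : ℝ := (volume (ball (0 : En n) 1)).toReal with hv_def
  have hv : 0 < v :=
    ENNReal.toReal_pos (measure_ball_pos volume _ one_pos).ne' measure_ball_lt_top.ne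
  set C : ℝ := 2 * v * ((8:ℝ)^p)⁻¹ with hC_def
  have hC : 0 < C := by positivity
  refine ⟨C, hC, ?_⟩
  intro lam cns hcns W hC11 hWL hanti xb hxbS hmin hWneg hxb0 hfar L hL
  have hxb : 0 < ‖xb‖ := norm_pos_iff.2 hxb0
  have hxblam : xb 0 < lam := hxbS
  set rb : En n := reflPt n lam xb with hrb_def
  -- distance from xb to its reflection
  have hrb_eq : rb = xb + EuclideanSpace.single 0 (2*(lam - xb 0)) := by
    ext i
    rcases eq_or_ne i 0 with hi | hi
    · subst hi
      rw [PiLp.add_apply, EuclideanSpace.single_apply]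
      simp [hrb_def, reflPt]
      ring
    · rw [PiLp.add_apply, EuclideanSpace.single_apply]
      simp [hrb_def, reflPt, hi]
  have hd_eq : dist rb xb = 2*(lam - xb 0) := by
    rw [hrb_eq, dist_eq_norm, add_sub_cancel_left, EuclideanSpace.norm_single,
      Real.norm_eq_abs, abs_of_nonneg (by linarith)]
  have hd_pos : 0 < dist rb xb := by rw [hd_eq]; linarith
  have hd_le : dist rb xb ≤ 4*‖xb‖ := by rw [hd_eq]; linarith
  set d : ℝ := dist rb xb with hdd_def
  -- center of the comparison ball
  set z : En n := xb - EuclideanSpace.single 0 (3*‖xb‖) with hz_def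
  have hz0 : z 0 = xb 0 - 3*‖xb‖ := by
    rw [hz_def, PiLp.sub_apply, EuclideanSpace.single_apply, if_pos rfl]
  have hdist_xz : dist xb z = 3*‖xb‖ := by
    rw [hz_def, dist_eq_norm, sub_sub_cancel, EuclideanSpace.norm_single, Real.norm_eq_abs,
      abs_of_nonneg (by positivity)]
  -- continuity of W near xb, giving a local bound
  obtain ⟨ε₁, hε₁, K, -, hdiff, -⟩ := hC11 xb (mem_univ xb)
  have hWcont : ContinuousOn W (ball xb ε₁) :=
    fun y hy => ((hdiff y hy).continuousAt).continuousWithinAt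
  obtain ⟨M0, hM0⟩ := (isCompact_closedBall xb (ε₁/2)).exists_bound_of_continuousOn
    (hWcont.mono (closedBall_subset_ball (by linarith)))
  have hM0nn : 0 ≤ M0 := le_trans (norm_nonneg _) (hM0 xb (mem_closedBall_self (by linarith)))
  set Ms : ℝ := 2*M0 * ((d/2)^p)⁻¹ with hMs_def
  have hMs : 0 ≤ Ms := by positivity
  -- measurability of the half space
  have hSmeas : MeasurableSet (halfSpace n lam) :=
    (isOpen_lt (by fun_prop : Continuous fun x : En n => x 0) continuous_const).measurableSet
  -- the target bound
  set B0 : ℝ := C * cns * ‖xb‖ ^ (-σ) * W xb with hB0_def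
  have hB0neg : B0 < 0 := by
    have hr : 0 < ‖xb‖ ^ (-σ) := Real.rpow_pos_of_pos hxb (-σ)
    exact mul_neg_of_pos_of_neg (by positivity) hWneg
  constructor
  swap
  · exact hB0neg
  -- the per-ε estimate
  have key : ∀ ε : ℝ, 0 < ε → ε ≤ 2*‖xb‖ → ε < d/2 → ε ≤ ε₁/2 →
      cns * ∫ y in {y : En n | ε ≤ dist xb y}, (W xb - W y) / dist xb y ^ p ≤
        B0 + cns * (Ms * (v * ε^n)) := by
    intro ε hε hε2 hε3 hε4
    set D : Set (En n) := {y | ε ≤ dist xb y} with hD_def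
    set D' : Set (En n) := {y | ε ≤ dist rb y} with hD'_def
    set A : Set (En n) := D ∩ halfSpace n lam with hA_def
    set A' : Set (En n) := D' ∩ halfSpace n lam with hA'_def
    set g : En n → ℝ := fun y => (W xb - W y) / dist xb y ^ p with hg_def
    set g2 : En n → ℝ := fun y => (W xb - W y) / dist rb y ^ p with hg2_def
    set h2 : En n → ℝ := fun y => (W xb + W y) / dist rb y ^ p with hh2_def
    set k2 : En n → ℝ := fun y => (2 * W xb) * (dist rb y ^ p)⁻¹ with hk2_def
    have hmD : MeasurableSet D := measurableSet_far xb ε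
    have hmD' : MeasurableSet D' := measurableSet_far rb ε
    have hmA : MeasurableSet A := hmD.inter hSmeas
    have hmA' : MeasurableSet A' := hmD'.inter hSmeas
    -- integrability
    have hWk1 := integrableOn_W_kernel hnp hp hWL.1 hWL.2 xb hε
    have hWk2 := integrableOn_W_kernel hnp hp hWL.1 hWL.2 rb hε
    have hker1 := integrableOn_kernel hnp hp xb hε
    have hker2 := integrableOn_kernel hnp hp rb hε
    have hIg : IntegrableOn g D volume := by
      have : g = fun y => (W xb) * (dist xb y ^ p)⁻¹ - W y * (dist xb y ^ p)⁻¹ := by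
        funext y; simp only [hg_def]; ring
      rw [this]
      exact (hker1.const_mul (W xb)).sub hWk1
    have hIg2 : IntegrableOn g2 D' volume := by
      have : g2 = fun y => (W xb) * (dist rb y ^ p)⁻¹ - W y * (dist rb y ^ p)⁻¹ := by
        funext y; simp only [hg2_def]; ring
      rw [this]
      exact (hker2.const_mul (W xb)).sub hWk2
    have hIh2 : IntegrableOn h2 D' volume := by
      have : h2 = fun y => (W xb) * (dist rb y ^ p)⁻¹ + W y * (dist rb y ^ p)⁻¹ := by
        funext y; simp only [hh2_def]; ring
      rw [this]
      exact (hker2.const_mul (W xb)).add hWk2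
    have hIk2 : IntegrableOn k2 D' volume := hker2.const_mul (2 * W xb)
    -- basic set inclusions
    have hdledist : ∀ y ∈ halfSpace n lam, dist xb y ≤ dist rb y := fun y hy =>
      dist_le_dist_refl hxblam hy
    have hAA' : A ⊆ A' := by
      rintro y ⟨hyD, hyS⟩
      exact ⟨le_trans hyD (hdledist y hyS), hyS⟩
    have hAD' : A ⊆ D' := hAA'.trans inter_subset_left
    -- ball facts
    set B : Set (En n) := ball z ‖xb‖ with hB_def
    have hBfacts : ∀ y ∈ B, y ∈ halfSpace n lam ∧ 2*‖xb‖ < dist xb y ∧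
        2*‖xb‖ < dist rb y ∧ dist rb y ≤ 8*‖xb‖ := by
      intro y hy
      rw [hB_def, mem_ball] at hy
      have hy0 : y 0 < lam := by
        have h1 : y 0 - z 0 ≤ |y 0 - z 0| := le_abs_self _
        have h2 : |y 0 - z 0| ≤ dist y z := by
          rw [← Real.dist_eq]; exact coord_le_dist y z 0
        have h3 : y 0 - z 0 ≤ dist y z := le_trans h1 h2
        have h4 : y 0 ≤ z 0 + dist y z := by linarith
        rw [hz0] at h4
        linarith [hy, hxblam, hxb]
      have hyS : y ∈ halfSpace n lam := hy0
      have hxy : 2*‖xb‖ < dist xb y := by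
        have := dist_triangle xb y z
        rw [hdist_xz] at this
        have h2 : dist y z < ‖xb‖ := hy
        linarith
      have hrby1 : 2*‖xb‖ < dist rb y := lt_of_lt_of_le hxy (hdledist y hyS)
      have hrby2 : dist rb y ≤ 8*‖xb‖ := by
        calc dist rb y ≤ dist rb xb + dist xb z + dist z y := dist_triangle4 rb xb z y
          _ ≤ 4*‖xb‖ + 3*‖xb‖ + ‖xb‖ := by
              have := hd_le
              rw [hdist_xz.symm] at *
              have h2 : dist z y < ‖xb‖ := by rwa [dist_comm]
              rw [hdist_xz]
              have : dist rb xb ≤ 4*‖xb‖ := hd_le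
              linarith
          _ = 8*‖xb‖ := by ring
      exact ⟨hyS, hxy, hrby1, hrby2⟩
    have hBA : B ⊆ A := by
      intro y hy
      obtain ⟨hyS, hxy, -, -⟩ := hBfacts y hy
      exact ⟨le_of_lt (lt_of_le_of_lt hε2 hxy), hyS⟩
    -- step 1 : split over the half spaces
    have hsplitset : A ∪ (D ∩ (halfSpace n lam)ᶜ) = D := by
      rw [hA_def, inter_union_compl]
    have step1 : ∫ y in D, g y = (∫ y in A, g y) + ∫ y in D ∩ (halfSpace n lam)ᶜ, g y := by
      conv_lhs => rw [← hsplitset]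
      exact setIntegral_union
        (Disjoint.mono inter_subset_right inter_subset_right disjoint_compl_right)
        (hmD.inter hSmeas.compl) (hIg.mono_set inter_subset_left)
        (hIg.mono_set inter_subset_left)
    -- step 2 : reflect the integral over the complement
    have hpre : reflPt n lam ⁻¹' (D ∩ (halfSpace n lam)ᶜ) = D' ∩ {y : En n | y 0 ≤ lam} := by
      ext y
      simp only [mem_preimage, mem_inter_iff, hD_def, hD'_def, mem_setOf_eq, mem_compl_iff,
        halfSpace, not_lt]
      constructor
      · rintro ⟨h1, h2⟩
        refine ⟨by rwa [dist_refl_right] at h1, ?_⟩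
        have : (reflPt n lam y) 0 = 2*lam - y 0 := by simp [reflPt]
        rw [this] at h2
        linarith
      · rintro ⟨h1, h2⟩
        refine ⟨by rwa [dist_refl_right], ?_⟩
        have : (reflPt n lam y) 0 = 2*lam - y 0 := by simp [reflPt]
        rw [this]
        linarith
    have hcompfun : (fun y => g (reflPt n lam y)) = h2 := by
      funext y
      rw [hg_def, hh2_def]
      simp only
      rw [hanti y, dist_refl_right, sub_neg_eq_add]
    have step2 : ∫ y in D ∩ (halfSpace n lam)ᶜ, g y
        = ∫ y in D' ∩ {y : En n | y 0 ≤ lam}, h2 y := by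
      rw [← refl_mp.setIntegral_preimage_emb (reflEquiv n lam).measurableEmbedding g
        (D ∩ (halfSpace n lam)ᶜ)]
      rw [hpre]
      exact setIntegral_congr_fun (hmD'.inter
        ((isClosed_le (by fun_prop : Continuous fun x : En n => x 0) continuous_const).measurableSet))
        (fun y _ => congrFun hcompfun y)
    -- step 3 : drop the boundary hyperplane
    have step3 : ∫ y in D' ∩ {y : En n | y 0 ≤ lam}, h2 y = ∫ y in A', h2 y := by
      apply setIntegral_congr_set
      rw [MeasureTheory.ae_eq_set]
      constructor
      · refine measure_mono_null ?_ (hyper_null (n := n) lam)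
        rintro y ⟨⟨hy1, hy2⟩, hy3⟩
        have h4 : ¬ (y 0 < lam) := fun hlt => hy3 ⟨hy1, hlt⟩
        exact le_antisymm hy2 (not_lt.1 h4)
      · rw [diff_eq_empty.2]
        · exact measure_empty
        · rintro y ⟨hy1, hy2⟩
          exact ⟨hy1, show y 0 ≤ lam from le_of_lt (show y 0 < lam from hy2)⟩
    -- step 4 : compare the kernels on A
    have step4 : ∫ y in A, g y ≤ ∫ y in A, g2 y := by
      apply setIntegral_mono_on (hIg.mono_set inter_subset_left) (hIg2.mono_set hAD') hmA
      rintro y ⟨hyD, hyS⟩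
      have hnum : W xb - W y ≤ 0 := sub_nonpos.2 (hmin y hyS)
      have hdxy : 0 < dist xb y := lt_of_lt_of_le hε hyD
      have hdd1 : 0 < dist xb y ^ p := Real.rpow_pos_of_pos hdxy p
      have hdd2 : 0 < dist rb y ^ p :=
        Real.rpow_pos_of_pos (lt_of_lt_of_le hdxy (hdledist y hyS)) p
      have hle : dist xb y ^ p ≤ dist rb y ^ p :=
        Real.rpow_le_rpow dist_nonneg (hdledist y hyS) hp.le
      simp only [hg_def, hg2_def]
      rw [div_le_div_iff₀ hdd1 hdd2]
      exact mul_le_mul_of_nonpos_left hle hnum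
    -- step 5 : split A' into A and A' \ A
    have step5 : ∫ y in A', h2 y = (∫ y in A, h2 y) + ∫ y in A' \ A, h2 y := by
      conv_lhs => rw [← union_diff_cancel hAA']
      exact setIntegral_union disjoint_sdiff_self_right (hmA'.diff hmA)
        (hIh2.mono_set hAD') (hIh2.mono_set ((diff_subset).trans inter_subset_left))
    -- step 6 : add the two kernels
    have step6 : (∫ y in A, g2 y) + ∫ y in A, h2 y = ∫ y in A, k2 y := by
      rw [← integral_add (hIg2.mono_set hAD') (hIh2.mono_set hAD')]
      apply setIntegral_congr_fun hmA
      intro y _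
      simp only [hg2_def, hh2_def, hk2_def]
      rw [← add_div]
      ring
    -- step 7 : shrink to the ball B
    have hk2nonpos : ∀ y, k2 y ≤ 0 := by
      intro y
      simp only [hk2_def]
      apply mul_nonpos_iff.2
      exact Or.inr ⟨by linarith, by positivity⟩
    have step7 : ∫ y in A, k2 y ≤ ∫ y in B, k2 y := by
      have hknegint : IntegrableOn (fun y => -(k2 y)) A volume := (hIk2.mono_set hAD').neg
      have hmono := setIntegral_mono_set hknegint
        (Eventually.of_forall (fun y => neg_nonneg.2 (hk2nonpos y)))
        (HasSubset.Subset.eventuallyLE hBA)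
      rw [integral_neg, integral_neg] at hmono
      linarith
    -- step 8 : constant bound on the ball
    have step8 : ∫ y in B, k2 y ≤ ∫ _ in B, (2 * W xb) * ((8*‖xb‖)^p)⁻¹ := by
      apply setIntegral_mono_on (hIk2.mono_set (hBA.trans hAD'))
        (integrableOn_const measure_ball_lt_top.ne) measurableSet_ball
      intro y hy
      obtain ⟨-, -, hrby1, hrby2⟩ := hBfacts y hy
      have hrby0 : 0 < dist rb y := lt_of_le_of_lt (by positivity) hrby1
      have hle : dist rb y ^ p ≤ (8*‖xb‖)^p := Real.rpow_le_rpow dist_nonneg hrby2 hp.le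
      have hpos : 0 < dist rb y ^ p := Real.rpow_pos_of_pos hrby0 p
      have hinv : ((8*‖xb‖)^p)⁻¹ ≤ (dist rb y ^ p)⁻¹ := by gcongr
      simp only [hk2_def]
      exact mul_le_mul_of_nonpos_left hinv (by linarith)
    -- step 9 : compute the constant integral
    have hμB : (volume B).toReal = ‖xb‖^(n:ℕ) * v := by
      rw [hB_def, Measure.addHaar_ball volume z hxb.le, ENNReal.toReal_mul,
        ENNReal.toReal_ofReal (by positivity), hv_def, finrank_euclideanSpace_fin]
    have hsplit8 : ((8:ℝ)*‖xb‖)^p = 8^p * ‖xb‖^p := Real.mul_rpow (by norm_num) hxb.le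
    have hxbpow : (‖xb‖:ℝ)^(n:ℕ) * (‖xb‖^p)⁻¹ = ‖xb‖^(-σ) := by
      rw [← Real.rpow_natCast ‖xb‖ n, ← Real.rpow_neg hxb.le, ← Real.rpow_add hxb]
      congr 1
      rw [hp_def]
      ring
    have step9 : ∫ _ in B, (2 * W xb) * ((8*‖xb‖)^p)⁻¹ = C * ‖xb‖^(-σ) * W xb := by
      rw [setIntegral_const, smul_eq_mul, measureReal_def, hμB, hsplit8, mul_inv, hC_def]
      calc ‖xb‖^(n:ℕ) * v * (2 * W xb * (((8:ℝ)^p)⁻¹ * (‖xb‖^p)⁻¹))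
          = (‖xb‖^(n:ℕ) * (‖xb‖^p)⁻¹) * (v * (2 * W xb * ((8:ℝ)^p)⁻¹)) := by ring
        _ = ‖xb‖^(-σ) * (v * (2 * W xb * ((8:ℝ)^p)⁻¹)) := by rw [hxbpow]
        _ = 2 * v * ((8:ℝ)^p)⁻¹ * ‖xb‖^(-σ) * W xb := by ring
    -- step 10 : the error term
    have hsub : A' \ A ⊆ ball xb ε := by
      rintro y ⟨⟨hyD', hyS⟩, hyA⟩
      rw [mem_ball]
      by_contra hcon
      push_neg at hcon
      rw [dist_comm] at hcon
      exact hyA ⟨hcon, hyS⟩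
    have hAAfin : volume (A' \ A) < ⊤ :=
      lt_of_le_of_lt (measure_mono hsub) measure_ball_lt_top
    have hpt : ∀ y ∈ A' \ A, ‖h2 y‖ ≤ Ms := by
      intro y hy
      have hyb : dist xb y < ε := by
        have := hsub hy
        rw [mem_ball, dist_comm] at this
        exact this
      have hycb : y ∈ closedBall xb (ε₁/2) := by
        rw [mem_closedBall, dist_comm]
        linarith
      have hWy : ‖W y‖ ≤ M0 := hM0 y hycb
      have hWxb : ‖W xb‖ ≤ M0 := hM0 xb (mem_closedBall_self (by linarith))
      have hrby : d/2 < dist rb y := by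
        have h1 : d ≤ dist rb y + dist y xb := dist_triangle rb y xb
        rw [dist_comm y xb] at h1
        linarith
      have hd2 : 0 < (d/2 : ℝ) := by linarith
      have hrbyp : (d/2)^p ≤ dist rb y ^ p := Real.rpow_le_rpow (by linarith) hrby.le hp.le
      have hdp2 : 0 < (d/2:ℝ)^p := Real.rpow_pos_of_pos hd2 p
      simp only [hh2_def]
      rw [norm_div, Real.norm_eq_abs (dist rb y ^ p),
        abs_of_nonneg (by positivity : (0:ℝ) ≤ dist rb y ^ p)]
      rw [hMs_def, mul_comm (2*M0) _, ← div_eq_inv_mul]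
      apply div_le_div₀ (by positivity) ?_ hdp2 hrbyp
      calc ‖W xb + W y‖ ≤ ‖W xb‖ + ‖W y‖ := norm_add_le _ _
        _ ≤ 2*M0 := by linarith
    have step10 : ∫ y in A' \ A, h2 y ≤ Ms * (v * ε^n) := by
      have haesm : AEStronglyMeasurable h2 (volume.restrict (A' \ A)) := by
        have h' : h2 = fun y => (W xb + W y) * (dist rb y ^ p)⁻¹ := by
          funext y; simp only [hh2_def]; ring
        rw [h']
        exact ((hWL.1.aestronglyMeasurable.const_add (W xb)).mul
          (Measurable.aestronglyMeasurable
            (show Measurable fun y : En n => (dist rb y ^ p)⁻¹ by fun_prop))).restrict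
      have hbnd := norm_setIntegral_le_of_norm_le_const (μ := volume) hAAfin hpt
      have h1 : ∫ y in A' \ A, h2 y ≤ Ms * (volume (A' \ A)).toReal :=
        le_trans (le_abs_self _) hbnd
      have h2' : (volume (A' \ A)).toReal ≤ (volume (ball xb ε)).toReal :=
        ENNReal.toReal_mono measure_ball_lt_top.ne (measure_mono hsub)
      have h3 : (volume (ball xb ε)).toReal = ε^(n:ℕ) * v := by
        rw [Measure.addHaar_ball volume xb hε.le, ENNReal.toReal_mul,
          ENNReal.toReal_ofReal (by positivity), hv_def, finrank_euclideanSpace_fin]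
      calc ∫ y in A' \ A, h2 y ≤ Ms * (volume (A' \ A)).toReal := h1
        _ ≤ Ms * (ε^(n:ℕ) * v) := by
            rw [← h3]
            exact mul_le_mul_of_nonneg_left h2' hMs
        _ = Ms * (v * ε^n) := by ring
    -- assemble
    have htotal : ∫ y in D, g y ≤ C * ‖xb‖^(-σ) * W xb + Ms * (v * ε^n) := by
      calc ∫ y in D, g y = (∫ y in A, g y) + ∫ y in D ∩ (halfSpace n lam)ᶜ, g y := step1
        _ = (∫ y in A, g y) + ∫ y in A', h2 y := by rw [step2, step3]
        _ ≤ (∫ y in A, g2 y) + ∫ y in A', h2 y := by linarith [step4]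
        _ = (∫ y in A, g2 y) + ((∫ y in A, h2 y) + ∫ y in A' \ A, h2 y) := by rw [step5]
        _ = (∫ y in A, k2 y) + ∫ y in A' \ A, h2 y := by rw [← step6]; ring
        _ ≤ (∫ y in B, k2 y) + ∫ y in A' \ A, h2 y := by linarith [step7]
        _ ≤ (∫ _ in B, (2 * W xb) * ((8*‖xb‖)^p)⁻¹) + ∫ y in A' \ A, h2 y := by
            linarith [step8]
        _ ≤ C * ‖xb‖^(-σ) * W xb + Ms * (v * ε^n) := by
            rw [step9]
            linarith [step10]
    calc cns * ∫ y in D, g y ≤ cns * (C * ‖xb‖^(-σ) * W xb + Ms * (v * ε^n)) :=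
          mul_le_mul_of_nonneg_left htotal hcns.le
      _ = B0 + cns * (Ms * (v * ε^n)) := by rw [hB0_def]; ring
  -- pass to the limit
  have htendφ : Tendsto (fun ε : ℝ => B0 + cns * (Ms * (v * ε^n))) (nhdsWithin 0 (Ioi 0))
      (nhds B0) := by
    have hc : Continuous fun ε : ℝ => B0 + cns * (Ms * (v * ε^n)) := by continuity
    have h0 : B0 + cns * (Ms * (v * (0:ℝ)^n)) = B0 := by
      rw [zero_pow (NeZero.ne n)]
      ring
    have := hc.tendsto 0
    rw [h0] at this
    exact this.mono_left nhdsWithin_le_nhds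
  have hev : ∀ᶠ ε in nhdsWithin (0:ℝ) (Ioi 0),
      cns * ∫ y in {y : En n | ε ≤ dist xb y}, (W xb - W y) / dist xb y ^ p ≤
        B0 + cns * (Ms * (v * ε^n)) := by
    have hm : (0:ℝ) < min (2*‖xb‖) (min (d/2) (ε₁/2)) := by
      apply lt_min (by positivity) (lt_min (by positivity) (by positivity))
    have h1 : ∀ᶠ ε in nhdsWithin (0:ℝ) (Ioi 0), ε < min (2*‖xb‖) (min (d/2) (ε₁/2)) :=
      (eventually_of_mem (Iio_mem_nhds hm) (fun x hx => hx)).filter_mono nhdsWithin_le_nhds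
    have h2 : ∀ᶠ ε in nhdsWithin (0:ℝ) (Ioi 0), ε ∈ Ioi (0:ℝ) := eventually_mem_nhdsWithin
    filter_upwards [h1, h2] with ε hεm hε0
    have hεa : ε ≤ 2*‖xb‖ := le_of_lt (lt_of_lt_of_le hεm (min_le_left _ _))
    have hεb : ε < d/2 := lt_of_lt_of_le hεm ((min_le_right _ _).trans (min_le_left _ _))
    have hεc : ε ≤ ε₁/2 := le_of_lt (lt_of_lt_of_le hεm
      ((min_le_right _ _).trans (min_le_right _ _)))
    exact key ε hε0 hεa hεb hεc
  exact le_of_tendsto_of_tendsto hL htendφ hev
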